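/- For a finite poset P with |P| ≥ 2 whose incomparability graph (the complement of the comparability graph) is disconnected, the maximal proper strong modules of P are exactly the connected components of the incomparability graph, and these components are linearly ordered by P (so the quotient is a chain). -/

import Mathlib

variable {α : Type*}

/-- The incomparability graph of a poset: `x ~ y` iff `x ≠ y` and `x, y` are
incomparable (the complement of the comparability graph). -/
def incompGraph (α : Type*) [PartialOrder α] : SimpleGraph α where
  Adj x y := x ≠ y ∧ ¬ x ≤ y ∧ ¬ y ≤ x
  symm := by
    constructor
    intro x y h
    exact ⟨Ne.symm h.1, h.2.2, h.2.1⟩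
  loopless := by
    constructor
    intro x h
    exact h.1 rfl

/-- `T` is a module of the poset `α`. -/
def IsModule [PartialOrder α] (T : Set α) : Prop :=
  ∀ u ∈ T, ∀ v ∈ T, ∀ x ∉ T, ((u ≤ x ↔ v ≤ x) ∧ (x ≤ u ↔ x ≤ v))

/-- `T` is a strong module. -/
def IsStrongModule [PartialOrder α] (T : Set α) : Prop :=
  IsModule T ∧ ∀ U : Set α, IsModule U → (U ∩ T).Nonempty → U ⊆ T ∨ T ⊆ U

/-- `T` is a maximal proper strong module. -/
def IsMaxProperStrongModule [PartialOrder α] (T : Set α) : Prop :=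
  IsStrongModule T ∧ T.Nonempty ∧ T ≠ Set.univ ∧
    ∀ U : Set α, IsStrongModule U → U ≠ Set.univ → T ⊆ U → U = T

section Aux
variable [PartialOrder α]

lemma incomp_comparable {x y : α} (h : ¬ (incompGraph α).Reachable x y) :
    x ≤ y ∨ y ≤ x := by
  by_contra hc
  push_neg at hc
  have hne : x ≠ y := by rintro rfl; exact h (SimpleGraph.Reachable.refl x)
  exact h (SimpleGraph.Adj.reachable ⟨hne, hc.1, hc.2⟩)

lemma step_iff {x x' y : α} (hadj : (incompGraph α).Adj x x')
    (h : ¬ (incompGraph α).Reachable x y) :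
    (x ≤ y ↔ x' ≤ y) ∧ (y ≤ x ↔ y ≤ x') := by
  have h' : ¬ (incompGraph α).Reachable x' y := fun hr => h (hadj.reachable.trans hr)
  have cx := incomp_comparable h
  have cx' := incomp_comparable h'
  obtain ⟨-, hxx', hx'x⟩ := hadj
  constructor
  · constructor
    · intro hxy
      rcases cx' with h1 | h1
      · exact h1
      · exact absurd (hxy.trans h1) hxx'
    · intro hx'y
      rcases cx with h1 | h1
      · exact h1
      · exact absurd (hx'y.trans h1) hx'x
  · constructor
    · intro hyx
      rcases cx' with h1 | h1
      · exact absurd (h1.trans hyx) hx'x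
      · exact h1
    · intro hyx'
      rcases cx with h1 | h1
      · exact absurd (h1.trans hyx') hxx'
      · exact h1

lemma walk_iff {y : α} : ∀ {a b : α}, (incompGraph α).Walk a b →
    ¬ (incompGraph α).Reachable a y → (a ≤ y ↔ b ≤ y) ∧ (y ≤ a ↔ y ≤ b) := by
  intro a b p
  induction p with
  | nil => exact fun _ => ⟨Iff.rfl, Iff.rfl⟩
  | cons hadj q ih =>
    intro h
    have h' : ¬ (incompGraph α).Reachable _ y := fun hr => h (hadj.reachable.trans hr)
    have s := step_iff hadj h
    have t := ih h'
    exact ⟨s.1.trans t.1, s.2.trans t.2⟩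

lemma reach_iff {x x' y : α} (hr : (incompGraph α).Reachable x x')
    (h : ¬ (incompGraph α).Reachable x y) : (x ≤ y ↔ x' ≤ y) ∧ (y ≤ x ↔ y ≤ x') :=
  hr.elim fun p => walk_iff p h

lemma uniform_iff {x x' y y' : α} (hx : (incompGraph α).Reachable x x')
    (hy : (incompGraph α).Reachable y y') (h : ¬ (incompGraph α).Reachable x y) :
    (x ≤ y ↔ x' ≤ y') ∧ (y ≤ x ↔ y' ≤ x') := by
  have h1 := reach_iff hx h
  have h' : ¬ (incompGraph α).Reachable x' y := fun hr => h (hx.trans hr)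
  have h'' : ¬ (incompGraph α).Reachable y x' := fun hr => h' hr.symm
  have h2 := reach_iff hy h''
  exact ⟨h1.1.trans h2.2, h1.2.trans h2.1⟩

lemma comp_module (x : α) : IsModule {y | (incompGraph α).Reachable x y} := by
  intro u hu v hv t ht
  have hut : ¬ (incompGraph α).Reachable u t := fun hr => ht ((hu : (incompGraph α).Reachable x u).trans hr)
  exact uniform_iff ((hu : (incompGraph α).Reachable x u).symm.trans hv)
    (SimpleGraph.Reachable.refl t) hut

lemma Vle_module (a : α) : IsModule {v | (incompGraph α).Reachable a v ∨ v ≤ a} := by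
  intro u hu v hv t ht
  simp only [Set.mem_setOf_eq, not_or] at ht hu hv
  obtain ⟨hta, htla⟩ := ht
  have hat : a ≤ t := by
    rcases incomp_comparable hta with h | h
    · exact h
    · exact absurd h htla
  have key : ∀ w, ((incompGraph α).Reachable a w ∨ w ≤ a) → w ≤ t ∧ ¬ t ≤ w := by
    rintro w (hw | hw)
    · have := uniform_iff hw (SimpleGraph.Reachable.refl t) hta
      exact ⟨this.1.mp hat, fun h => htla (this.2.mpr h)⟩
    · exact ⟨hw.trans hat, fun h => htla (h.trans hw)⟩
  obtain ⟨hu1, hu2⟩ := key u hu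
  obtain ⟨hv1, hv2⟩ := key v hv
  exact ⟨iff_of_true hu1 hv1, iff_of_false hu2 hv2⟩

lemma Vge_module (a : α) : IsModule {v | (incompGraph α).Reachable a v ∨ a ≤ v} := by
  intro u hu v hv t ht
  simp only [Set.mem_setOf_eq, not_or] at ht hu hv
  obtain ⟨hta, htla⟩ := ht
  have hat : t ≤ a := by
    rcases incomp_comparable hta with h | h
    · exact absurd h htla
    · exact h
  have key : ∀ w, ((incompGraph α).Reachable a w ∨ a ≤ w) → t ≤ w ∧ ¬ w ≤ t := by
    rintro w (hw | hw)
    · have := uniform_iff hw (SimpleGraph.Reachable.refl t) hta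
      exact ⟨this.2.mp hat, fun h => htla (this.1.mpr h)⟩
    · exact ⟨hat.trans hw, fun h => htla (hw.trans h)⟩
  obtain ⟨hu1, hu2⟩ := key u hu
  obtain ⟨hv1, hv2⟩ := key v hv
  exact ⟨iff_of_false hu2 hv2, iff_of_true hu1 hv1⟩

lemma crossing {U : Set α} : ∀ {p c : α}, (incompGraph α).Walk p c →
    p ∈ U → c ∉ U → ∃ a b, (incompGraph α).Adj a b ∧ a ∈ U ∧ b ∉ U ∧
      (incompGraph α).Reachable p b := by
  intro p c w
  induction w with
  | nil => intro hp hc; exact absurd hp hc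
  | @cons p m c hadj q ih =>
    intro hp hc
    by_cases hm : m ∈ U
    · obtain ⟨a, b, h1, h2, h3, h4⟩ := ih hm hc
      exact ⟨a, b, h1, h2, h3, hadj.reachable.trans h4⟩
    · exact ⟨p, m, hadj, hp, hm, hadj.reachable⟩

lemma comp_strong (x : α) : IsStrongModule {y | (incompGraph α).Reachable x y} := by
  refine ⟨comp_module x, fun U hU ⟨p, hpU, hpC⟩ => ?_⟩
  by_cases hUC : U ⊆ {y | (incompGraph α).Reachable x y}
  · exact Or.inl hUC
  · right
    rw [Set.not_subset] at hUC
    obtain ⟨w, hwU, hwC⟩ := hUC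
    intro c hcC
    by_contra hcU
    have hpc : (incompGraph α).Reachable p c :=
      (hpC : (incompGraph α).Reachable x p).symm.trans hcC
    obtain ⟨pw⟩ := hpc
    obtain ⟨a, b, hadj, haU, hbU, hpb⟩ := crossing pw hpU hcU
    have hbC : (incompGraph α).Reachable x b :=
      (hpC : (incompGraph α).Reachable x p).trans hpb
    have hmod := hU a haU w hwU b hbU
    obtain ⟨hne, hab, hba⟩ := hadj
    have hwb : ¬ w ≤ b := fun h => hab (hmod.1.mpr h)
    have hbw : ¬ b ≤ w := fun h => hba (hmod.2.mpr h)
    have hbw' : b ≠ w := by rintro rfl; exact hwC hbC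
    exact hwC (hbC.trans (SimpleGraph.Adj.reachable ⟨hbw', hbw, hwb⟩))

lemma comp_max (x : α) :
    ∀ U : Set α, IsStrongModule U → U ≠ Set.univ →
      {y | (incompGraph α).Reachable x y} ⊆ U → U = {y | (incompGraph α).Reachable x y} := by
  intro U hU hUne hCU
  by_contra hne
  have : ∃ w ∈ U, w ∉ {y | (incompGraph α).Reachable x y} := by
    by_contra h
    push_neg at h
    exact hne (le_antisymm h hCU)
  obtain ⟨w, hwU, hwC⟩ := this
  have : ∃ z, z ∉ U := by
    by_contra h
    push_neg at h
    exact hUne (Set.eq_univ_of_forall h)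
  obtain ⟨z, hzU⟩ := this
  have hxU : x ∈ U := hCU (SimpleGraph.Reachable.refl x)
  have hzx : ¬ (incompGraph α).Reachable x z := fun h => hzU (hCU h)
  have hznex : z ≠ x := by rintro rfl; exact hzU hxU
  rcases incomp_comparable hzx with hxz | hzxle
  · -- x ≤ z : z lies above all of U
    have hznle : ¬ z ≤ x := fun h => hznex (le_antisymm h hxz)
    have hzabove : ∀ u ∈ U, u ≤ z ∧ ¬ z ≤ u := by
      intro u huU
      have hmod := hU.1 x hxU u huU z hzU
      exact ⟨hmod.1.mp hxz, fun h => hznle (hmod.2.mpr h)⟩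
    have hstr := hU.2 _ (Vge_module x)
      ⟨x, Or.inl (SimpleGraph.Reachable.refl x), hxU⟩
    have hwx : x ≤ w := by
      rcases hstr with hVU | hUV
      · exact absurd (hVU (Or.inr (hzabove x hxU).1)) hzU
      · rcases hUV hwU with h | h
        · exact absurd h hwC
        · exact h
    have hstr' := hU.2 _ (Vge_module w)
      ⟨w, Or.inl (SimpleGraph.Reachable.refl w), hwU⟩
    rcases hstr' with hVU | hUV
    · exact hzU (hVU (Or.inr (hzabove w hwU).1))
    · rcases hUV hxU with h | h
      · exact hwC h.symm
      · have hxw : x = w := le_antisymm hwx h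
        exact hwC (by rw [← hxw]; exact SimpleGraph.Reachable.refl x)
  · -- z ≤ x : z lies below all of U
    have hznle : ¬ x ≤ z := fun h => hznex (le_antisymm hzxle h)
    have hzbelow : ∀ u ∈ U, z ≤ u ∧ ¬ u ≤ z := by
      intro u huU
      have hmod := hU.1 x hxU u huU z hzU
      exact ⟨hmod.2.mp hzxle, fun h => hznle (hmod.1.mpr h)⟩
    have hstr := hU.2 _ (Vle_module x)
      ⟨x, Or.inl (SimpleGraph.Reachable.refl x), hxU⟩
    have hwx : w ≤ x := by
      rcases hstr with hVU | hUV
      · exact absurd (hVU (Or.inr (hzbelow x hxU).1)) hzU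
      · rcases hUV hwU with h | h
        · exact absurd h hwC
        · exact h
    have hstr' := hU.2 _ (Vle_module w)
      ⟨w, Or.inl (SimpleGraph.Reachable.refl w), hwU⟩
    rcases hstr' with hVU | hUV
    · exact hzU (hVU (Or.inr (hzbelow w hwU).1))
    · rcases hUV hxU with h | h
      · exact hwC h.symm
      · have hxw : x = w := le_antisymm h hwx
        exact hwC (by rw [← hxw]; exact SimpleGraph.Reachable.refl x)

end Aux

/-- For a finite poset with at least two elements whose incomparability graph is
disconnected (series type), the maximal proper strong modules are exactly the
connected components of the incomparability graph, any two elements of distinct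
components are comparable, and the comparison is uniform across components, so the
quotient is a chain. -/
theorem series_type_gallai [Fintype α] [PartialOrder α]
    (hcard : 2 ≤ Fintype.card α) (hdis : ¬ (incompGraph α).Connected) :
    (∀ T : Set α, IsMaxProperStrongModule T ↔
      ∃ x : α, T = {y | (incompGraph α).Reachable x y}) ∧
    (∀ x y : α, ¬ (incompGraph α).Reachable x y → x ≤ y ∨ y ≤ x) ∧
    (∀ x x' y y' : α, (incompGraph α).Reachable x x' → (incompGraph α).Reachable y y' →
      ¬ (incompGraph α).Reachable x y → (x ≤ y ↔ x' ≤ y')) := by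
  have hne : Nonempty α := Fintype.card_pos_iff.mp (by omega)
  have hnotpre : ¬ (incompGraph α).Preconnected := fun hp => hdis ⟨hp⟩
  have hcompne : ∀ x : α, {y | (incompGraph α).Reachable x y} ≠ Set.univ := by
    intro x heq
    apply hnotpre
    intro a b
    have ha : (incompGraph α).Reachable x a := Set.eq_univ_iff_forall.mp heq a
    have hb : (incompGraph α).Reachable x b := Set.eq_univ_iff_forall.mp heq b
    exact ha.symm.trans hb
  refine ⟨?_, fun x y h => incomp_comparable h,
    fun x x' y y' hx hy h => (uniform_iff hx hy h).1⟩
  intro T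
  constructor
  · rintro ⟨⟨Tmod, Tstrong⟩, ⟨x, hxT⟩, Tne, Tmax⟩
    refine ⟨x, ?_⟩
    rcases Tstrong _ (comp_module x) ⟨x, SimpleGraph.Reachable.refl x, hxT⟩ with hCT | hTC
    · exact comp_max x T ⟨Tmod, Tstrong⟩ Tne hCT
    · exact (Tmax _ (comp_strong x) (hcompne x) hTC).symm
  · rintro ⟨x, rfl⟩
    exact ⟨comp_strong x, ⟨x, SimpleGraph.Reachable.refl x⟩, hcompne x, comp_max x⟩
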